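/- arXiv:2405.13146 — 3 statements merged into one kernel-verified Lean document; each statement's English description precedes it below -/
import Mathlib

section
/- For every finite set G of natural numbers and every natural number i, the product of x k over k ∈ (Finset.Icc i N) \ G equals φ i multiplied by the product of (φ j * φ (j+1)) over j ∈ (Finset.Icc i N) ∩ G. (This is the identity Eq. (8) of the paper expressing the hidden features purely in terms of the observable features φ.) -/
/-- For every finite set `G` of naturals and every `i`,
`∏_{k ∈ Icc i N \ G} x k = φ i * ∏_{j ∈ Icc i N ∩ G} (φ j * φ (j+1))`. -/
theorem stmt2 (N : ℕ) (hN : 1 ≤ N) (x : ℕ → ℤ)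
    (hx : ∀ k, x k = 1 ∨ x k = -1)
    (φ : ℕ → ℤ) (hφ : ∀ i, φ i = ∏ k ∈ Finset.Icc i N, x k) :
    ∀ (G : Finset ℕ) (i : ℕ),
      ∏ k ∈ Finset.Icc i N \ G, x k
        = φ i * ∏ j ∈ Finset.Icc i N ∩ G, (φ j * φ (j + 1)) := by
  intro G i
  have hsq : ∀ k, x k * x k = 1 := by
    intro k; rcases hx k with h | h <;> simp [h]
  have hφsq : ∀ j, φ j * φ j = 1 := by
    intro j
    rw [hφ j, ← Finset.prod_mul_distrib]
    exact Finset.prod_eq_one fun k _ => hsq k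
  have hstep : ∀ j ∈ Finset.Icc i N ∩ G, x j * (φ j * φ (j + 1)) = 1 := by
    intro j hj
    have hjN : j ≤ N := (Finset.mem_Icc.1 (Finset.mem_inter.1 hj).1).2
    have hφj : φ j = x j * φ (j + 1) := by
      rw [hφ j, hφ (j + 1),
        show Finset.Icc j N = insert j (Finset.Icc (j + 1) N) by
          ext m; simp [Finset.mem_Icc]; omega,
        Finset.prod_insert (by simp)]
    calc x j * (φ j * φ (j + 1)) = (x j * x j) * (φ (j + 1) * φ (j + 1)) := by
            rw [hφj]; ring
      _ = 1 := by rw [hsq, hφsq, one_mul]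
  have hsplit : φ i = (∏ k ∈ Finset.Icc i N \ G, x k) * ∏ k ∈ Finset.Icc i N ∩ G, x k := by
    rw [hφ i, ← Finset.sdiff_union_inter (Finset.Icc i N) G,
      Finset.prod_union (Finset.disjoint_sdiff_inter _ _),
      Finset.sdiff_union_inter]
  rw [hsplit, mul_assoc, ← Finset.prod_mul_distrib,
    Finset.prod_congr rfl hstep, Finset.prod_const_one, mul_one]
end

section
/- The observable features factor through the hidden features and the ghost bits as follows: (a) for every i with 1 ≤ i < ι 0, φ i = φ* i * ∏_{j : Fin m} (2 * b (ι j) − 1); (b) for every k with k + 1 ≤ m − 1 and every i with ι k < i < ι (k+1), φ i = φ* (i − (k+1)) * ∏_{j : Fin m, j ≥ k+1} (2 * b (ι j) − 1); (c) for every i with ι (m−1) < i ≤ n + m, φ i = φ* (i − m). -/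
open Finset

lemma filter_lt_eq_Iic {m : ℕ} (ι : Fin m → ℕ) (hmono : StrictMono ι)
    {t i : ℕ} (ht : t < m) (h1 : ι ⟨t, ht⟩ < i)
    (h2 : ∀ j : Fin m, t < (j : ℕ) → i ≤ ι j) :
    (univ.filter fun j : Fin m => ι j < i) = Iic ⟨t, ht⟩ := by
  ext j
  simp only [mem_filter, mem_univ, true_and, mem_Iic, Fin.le_def]
  constructor
  · intro hj
    by_contra hc
    push_neg at hc
    exact absurd hj (not_lt.mpr (h2 j hc))
  · intro hj
    exact lt_of_le_of_lt (hmono.monotone (by simp only [Fin.le_def]; omega)) h1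

lemma filter_ge_eq {m : ℕ} (ι : Fin m → ℕ) (hmono : StrictMono ι)
    {t i : ℕ} (ht : t < m) (h1 : ι ⟨t, ht⟩ < i)
    (h2 : ∀ j : Fin m, t < (j : ℕ) → i ≤ ι j) :
    (univ.filter fun j : Fin m => i ≤ ι j)
      = univ.filter fun j : Fin m => t + 1 ≤ (j : ℕ) := by
  ext j
  simp only [mem_filter, mem_univ, true_and]
  constructor
  · intro hj
    by_contra hc
    push_neg at hc
    have : ι j ≤ ι ⟨t, ht⟩ := hmono.monotone (by simp only [Fin.le_def]; omega)
    omega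
  · intro hj
    exact h2 j (by omega)

lemma key_lemma (n m : ℕ) (hm : 1 ≤ m)
    (ι : Fin m → ℕ) (hmono : StrictMono ι)
    (hfirst : 1 ≤ ι ⟨0, hm⟩) (hlast : ι ⟨m - 1, by have := hm; omega⟩ ≤ n + m)
    (b : ℕ → ℤ) (c : ℕ → ℤ)
    (hc1 : ∀ i, 1 ≤ i → i < ι ⟨0, hm⟩ → c i = b i)
    (hc2 : ∀ k (hk : k + 1 ≤ m - 1), ∀ i,
      ι ⟨k, by have := hm; omega⟩ < i → i < ι ⟨k + 1, by have := hm; omega⟩ → c (i - (k + 1)) = b i)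
    (hc3 : ∀ i, ι ⟨m - 1, by have := hm; omega⟩ < i → i ≤ n + m → c (i - m) = b i) :
    ∀ i, 1 ≤ i →
      ∏ k ∈ Icc i (n + m), (2 * b k - 1) =
      (∏ k ∈ Icc (i - (univ.filter fun j : Fin m => ι j < i).card) n, (2 * c k - 1)) *
      ∏ j ∈ univ.filter (fun j : Fin m => i ≤ ι j), (2 * b (ι j) - 1) := by
  have hι1 : ∀ j : Fin m, 1 ≤ ι j := fun j =>
    le_trans hfirst (hmono.monotone (by simp only [Fin.le_def]; omega))
  have hιle : ∀ j : Fin m, ι j ≤ n + m := fun j =>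
    le_trans (hmono.monotone (by simp only [Fin.le_def]; have := j.isLt; omega)) hlast
  -- the case of large i
  have top : ∀ i, n + m < i →
      ∏ k ∈ Icc i (n + m), (2 * b k - 1) =
      (∏ k ∈ Icc (i - (univ.filter fun j : Fin m => ι j < i).card) n, (2 * c k - 1)) *
      ∏ j ∈ univ.filter (fun j : Fin m => i ≤ ι j), (2 * b (ι j) - 1) := by
    intro i hi
    have e1 : Icc i (n + m) = ∅ := Icc_eq_empty (by omega)
    have e2 : (univ.filter fun j : Fin m => ι j < i) = univ :=
      filter_true_of_mem fun j _ => lt_of_le_of_lt (hιle j) hi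
    have e3 : (univ.filter fun j : Fin m => i ≤ ι j) = ∅ :=
      filter_false_of_mem fun j _ => by have := hιle j; omega
    have e4 : Icc (i - m) n = ∅ := Icc_eq_empty (by omega)
    rw [e1, e2, e3]
    simp only [card_univ, Fintype.card_fin, e4, prod_empty, one_mul]
  have main : ∀ d i, 1 ≤ i → n + m + 1 ≤ i + d →
      ∏ k ∈ Icc i (n + m), (2 * b k - 1) =
      (∏ k ∈ Icc (i - (univ.filter fun j : Fin m => ι j < i).card) n, (2 * c k - 1)) *
      ∏ j ∈ univ.filter (fun j : Fin m => i ≤ ι j), (2 * b (ι j) - 1) := by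
    intro d
    induction d with
    | zero => intro i h1 h2; exact top i (by omega)
    | succ d ih =>
      intro i h1 h2
      by_cases hi : n + m < i
      · exact top i hi
      push_neg at hi
      have IH := ih (i + 1) (by omega) (by omega)
      have hsplit : ∏ k ∈ Icc i (n + m), (2 * b k - 1) =
          (2 * b i - 1) * ∏ k ∈ Icc (i + 1) (n + m), (2 * b k - 1) := by
        rw [Icc_eq_cons_Ioc hi, prod_cons, ← Finset.Icc_add_one_left_eq_Ioc]
      by_cases hg : ∃ t : Fin m, ι t = i
      · obtain ⟨t, hti⟩ := hg
        have hfe : (univ.filter fun j : Fin m => ι j < i + 1)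
            = insert t (univ.filter fun j : Fin m => ι j < i) := by
          ext j
          simp only [mem_filter, mem_univ, true_and, mem_insert]
          constructor
          · intro hj
            by_cases hji : ι j = i
            · exact Or.inl (hmono.injective (by rw [hji, hti]))
            · exact Or.inr (by omega)
          · rintro (rfl | hj)
            · omega
            · omega
        have hcnt : (univ.filter fun j : Fin m => ι j < i + 1).card
            = (univ.filter fun j : Fin m => ι j < i).card + 1 := by
          rw [hfe, card_insert_of_notMem]
          simp [hti]
        have hgf : (univ.filter fun j : Fin m => i ≤ ι j)
            = insert t (univ.filter fun j : Fin m => i + 1 ≤ ι j) := by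
          ext j
          simp only [mem_filter, mem_univ, true_and, mem_insert]
          constructor
          · intro hj
            by_cases hji : ι j = i
            · exact Or.inl (hmono.injective (by rw [hji, hti]))
            · exact Or.inr (by omega)
          · rintro (rfl | hj)
            · omega
            · omega
        have hnotmem : t ∉ (univ.filter fun j : Fin m => i + 1 ≤ ι j) := by
          simp [hti]
        rw [hsplit, IH, hcnt, hgf, prod_insert hnotmem, hti,
          show i + 1 - ((univ.filter fun j : Fin m => ι j < i).card + 1)
            = i - (univ.filter fun j : Fin m => ι j < i).card from by omega]
        ring
      · push_neg at hg
        have hce : (univ.filter fun j : Fin m => ι j < i + 1)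
            = univ.filter fun j : Fin m => ι j < i := by
          ext j
          simp only [mem_filter, mem_univ, true_and]
          have := hg j
          omega
        have hge : (univ.filter fun j : Fin m => i ≤ ι j)
            = univ.filter fun j : Fin m => i + 1 ≤ ι j := by
          ext j
          simp only [mem_filter, mem_univ, true_and]
          have := hg j
          omega
        set C := (univ.filter fun j : Fin m => ι j < i).card with hC
        -- upper bound on the ghost-tail card
        have hub : (univ.filter fun j : Fin m => i ≤ ι j).card
            ≤ (Icc (i + 1) (n + m)).card := by
          apply card_le_card_of_injOn ι
          · intro j hj
            simp only [mem_coe, mem_filter, mem_univ, true_and] at hj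
            have := hιle j
            have := hg j
            simp only [mem_coe, mem_Icc]
            omega
          · exact hmono.injective.injOn
        rw [Nat.card_Icc] at hub
        have hsum : C + (univ.filter fun j : Fin m => i ≤ ι j).card = m := by
          rw [hC]
          have := card_filter_add_card_filter_not
            (s := (univ : Finset (Fin m))) (p := fun j => ι j < i)
          simp only [not_lt, card_univ, Fintype.card_fin] at this
          exact this
        have hlb : C ≤ (Icc 1 (i - 1)).card := by
          rw [hC]
          apply card_le_card_of_injOn ι
          · intro j hj
            simp only [mem_coe, mem_filter, mem_univ, true_and] at hj
            have := hι1 j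
            simp only [mem_coe, mem_Icc]
            omega
          · exact hmono.injective.injOn
        rw [Nat.card_Icc] at hlb
        have hCi : C ≤ i - 1 := by omega
        have hCn : i - C ≤ n := by omega
        have hcb : c (i - C) = b i := by
          by_cases h0 : i < ι ⟨0, hm⟩
          · have : (univ.filter fun j : Fin m => ι j < i) = ∅ :=
              filter_false_of_mem fun j _ => by
                have : ι ⟨0, hm⟩ ≤ ι j := hmono.monotone (by simp only [Fin.le_def]; omega)
                omega
            rw [hC, this]
            simp only [card_empty, Nat.sub_zero]
            exact hc1 i h1 h0
          · by_cases hl : ι ⟨m - 1, by omega⟩ < i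
            · have : (univ.filter fun j : Fin m => ι j < i) = univ :=
                filter_true_of_mem fun j _ => by
                  have : ι j ≤ ι ⟨m - 1, by omega⟩ :=
                    hmono.monotone (by simp only [Fin.le_def]; have := j.isLt; omega)
                  omega
              rw [hC, this, card_univ, Fintype.card_fin]
              exact hc3 i hl hi
            · push_neg at h0 hl
              set S := (univ.filter fun j : Fin m => ι j < i) with hS
              have hSne : S.Nonempty := by
                refine ⟨⟨0, hm⟩, ?_⟩
                simp only [hS, mem_filter, mem_univ, true_and]
                have := hg ⟨0, hm⟩
                omega
              set t := S.max' hSne with ht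
              have htmem : t ∈ S := S.max'_mem hSne
              have hti : ι t < i := by
                simp only [hS, mem_filter, mem_univ, true_and] at htmem
                exact htmem
              have hnext : ∀ j : Fin m, (t : ℕ) < (j : ℕ) → i ≤ ι j := by
                intro j hj
                by_contra hcon
                push_neg at hcon
                have : j ≤ t := S.le_max' j (by simp [hS, hcon])
                rw [Fin.le_def] at this
                omega
              have htm : (t : ℕ) + 1 ≤ m - 1 := by
                have hlt := t.isLt
                rcases Nat.lt_or_ge ((t : ℕ)) (m - 1) with h | h
                · omega
                · exfalso
                  have : (t : ℕ) = m - 1 := by omega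
                  have : ι ⟨m - 1, by omega⟩ < i := by
                    rw [show (⟨m - 1, by omega⟩ : Fin m) = t from by
                      apply Fin.ext; simp [this]]
                    exact hti
                  omega
              have hCt : C = (t : ℕ) + 1 := by
                rw [hC, hS, filter_lt_eq_Iic ι hmono t.isLt (by simpa using hti)
                  (by simpa using hnext), Fin.card_Iic]
              have hnext' : i < ι ⟨(t : ℕ) + 1, by omega⟩ := by
                have h1' := hnext ⟨(t : ℕ) + 1, by omega⟩ (by simp)
                have h2' := hg ⟨(t : ℕ) + 1, by omega⟩
                omega
              rw [hCt]
              exact hc2 (t : ℕ) htm i (by simpa using hti) hnext'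
        rw [hsplit, IH, hce, hge, ← hC,
          show i + 1 - C = (i - C) + 1 from by omega,
          show (∏ k ∈ Icc (i - C) n, (2 * c k - 1)) =
            (2 * c (i - C) - 1) * ∏ k ∈ Icc ((i - C) + 1) n, (2 * c k - 1) from by
            rw [Icc_eq_cons_Ioc hCn, prod_cons, ← Finset.Icc_add_one_left_eq_Ioc],
          hcb]
        ring
  intro i h1
  exact main (n + m + 1) i h1 (by omega)

/-- the observable features factor through the hidden features
and the ghost bits. -/
theorem stmt3 (n m : ℕ) (hn : 1 ≤ n) (hm : 1 ≤ m)
    (ι : Fin m → ℕ) (hmono : StrictMono ι)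
    (hfirst : 1 ≤ ι ⟨0, hm⟩) (hlast : ι ⟨m - 1, by omega⟩ ≤ n + m)
    (b : ℕ → ℤ) (hb : ∀ k, b k = 0 ∨ b k = 1)
    (c : ℕ → ℤ)
    (hc1 : ∀ i, 1 ≤ i → i < ι ⟨0, hm⟩ → c i = b i)
    (hc2 : ∀ k (hk : k + 1 ≤ m - 1), ∀ i,
      ι ⟨k, by omega⟩ < i → i < ι ⟨k + 1, by omega⟩ → c (i - (k + 1)) = b i)
    (hc3 : ∀ i, ι ⟨m - 1, by omega⟩ < i → i ≤ n + m → c (i - m) = b i)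
    (φs : ℕ → ℤ) (hφs : ∀ i, φs i = ∏ k ∈ Finset.Icc i n, (2 * c k - 1))
    (φ : ℕ → ℤ) (hφ : ∀ i, φ i = ∏ k ∈ Finset.Icc i (n + m), (2 * b k - 1)) :
    (∀ i, 1 ≤ i → i < ι ⟨0, hm⟩ →
      φ i = φs i * ∏ j : Fin m, (2 * b (ι j) - 1)) ∧
    (∀ k (hk : k + 1 ≤ m - 1), ∀ i,
      ι ⟨k, by omega⟩ < i → i < ι ⟨k + 1, by omega⟩ →
      φ i = φs (i - (k + 1)) *
        ∏ j ∈ Finset.univ.filter (fun j : Fin m => k + 1 ≤ (j : ℕ)),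
          (2 * b (ι j) - 1)) ∧
    (∀ i, ι ⟨m - 1, by omega⟩ < i → i ≤ n + m → φ i = φs (i - m)) := by
  have key := key_lemma n m hm ι hmono hfirst hlast b c hc1 hc2 hc3
  refine ⟨?_, ?_, ?_⟩
  · intro i h1 h2
    rw [hφ, hφs, key i h1]
    have e1 : (univ.filter fun j : Fin m => ι j < i) = ∅ :=
      filter_false_of_mem fun j _ => by
        have : ι ⟨0, hm⟩ ≤ ι j := hmono.monotone (by simp only [Fin.le_def]; omega)
        omega
    have e2 : (univ.filter fun j : Fin m => i ≤ ι j) = univ :=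
      filter_true_of_mem fun j _ => by
        have : ι ⟨0, hm⟩ ≤ ι j := hmono.monotone (by simp only [Fin.le_def]; omega)
        omega
    rw [e1, e2]
    simp
  · intro k hk i hlt hlt2
    have ht : k < m := by omega
    have h1 : 1 ≤ i := by
      have : 1 ≤ ι ⟨k, by omega⟩ :=
        le_trans hfirst (hmono.monotone (by simp only [Fin.le_def]; omega))
      omega
    have h2' : ∀ j : Fin m, k < (j : ℕ) → i ≤ ι j := by
      intro j hj
      have : ι ⟨k + 1, by omega⟩ ≤ ι j := hmono.monotone (by simp only [Fin.le_def]; omega)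
      omega
    rw [hφ, hφs, key i h1, filter_lt_eq_Iic ι hmono ht hlt h2', Fin.card_Iic,
      filter_ge_eq ι hmono ht hlt h2']
  · intro i hl hi2
    have h1 : 1 ≤ i := by omega
    rw [hφ, hφs, key i h1]
    have e1 : (univ.filter fun j : Fin m => ι j < i) = univ :=
      filter_true_of_mem fun j _ => by
        have : ι j ≤ ι ⟨m - 1, by omega⟩ :=
          hmono.monotone (by simp only [Fin.le_def]; have := j.isLt; omega)
        omega
    have e2 : (univ.filter fun j : Fin m => i ≤ ι j) = ∅ :=
      filter_false_of_mem fun j _ => by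
        have : ι j ≤ ι ⟨m - 1, by omega⟩ :=
          hmono.monotone (by simp only [Fin.le_def]; have := j.isLt; omega)
        omega
    rw [e1, e2, card_univ, Fintype.card_fin]
    simp
end

section
/- Let M = 84 (corresponding to n = 64 PUF stages and m = 20 ghost bits) and N = 10^6, and fix a coordinate i : Fin 84. Under the uniform probability measure on Fin N → (Fin M → Bool), the probability that there exist distinct indices a, b : Fin N such that f a and f b differ exactly in coordinate i is less than (1/2)^45. -/
set_option linter.constructorNameAsVariable false


open MeasureTheory Finset ENNReal

abbrev N' : ℕ := 10 ^ 6

def Spair (i : Fin 84) (p : Fin N' × Fin N') : Set (Fin N' → Fin 84 → Bool) :=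
  {f | (∀ j, j ≠ i → f p.1 j = f p.2 j) ∧ f p.1 i ≠ f p.2 i}

lemma card_Spair_le (i : Fin 84) (p : Fin N' × Fin N') (hp : p.1 ≠ p.2)
    [Fintype (Spair i p)] :
    Fintype.card (Spair i p) ≤ (2 ^ 84) ^ (N' - 1) := by
  classical
  have hinj : Function.Injective
      (fun (f : Spair i p) (c : {c : Fin N' // c ≠ p.2}) => f.1 c.1) := by
    rintro ⟨f, hf1, hf2⟩ ⟨g, hg1, hg2⟩ h
    apply Subtype.ext
    have hres : ∀ c : Fin N', c ≠ p.2 → f c = g c := fun c hc =>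
      congrFun h ⟨c, hc⟩
    have hfa : f p.1 = g p.1 := hres p.1 hp
    funext c j
    show f c j = g c j
    by_cases hc : c = p.2
    · subst hc
      by_cases hj : j = i
      · subst hj
        have h1 : f p.2 j = !(f p.1 j) := Bool.eq_not_iff.mpr (Ne.symm hf2)
        have h2 : g p.2 j = !(g p.1 j) := Bool.eq_not_iff.mpr (Ne.symm hg2)
        rw [h1, h2, hfa]
      · rw [← hf1 j hj, ← hg1 j hj, hfa]
    · rw [hres c hc]
  calc Fintype.card (Spair i p)
      ≤ Fintype.card ({c : Fin N' // c ≠ p.2} → Fin 84 → Bool) :=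
        Fintype.card_le_of_injective _ hinj
    _ = (2 ^ 84) ^ (N' - 1) := by
        rw [Fintype.card_fun, Fintype.card_fun, Fintype.card_bool, Fintype.card_fin]
        have h1 : Fintype.card {c : Fin N' // c ≠ p.2} = N' - 1 := by
          rw [Fintype.card_subtype_compl, Fintype.card_fin, Fintype.card_subtype_eq]
        rw [h1]

/-- with `M = 84` (`n = 64` PUF stages and `m = 20` ghost bits) and
`N = 10^6` passively accumulated challenges, under the uniform probability measure
on `Fin N → (Fin M → Bool)` the probability that some two distinct challenges
differ exactly in a fixed coordinate `i` is less than `(1/2)^45`. -/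
theorem stmt14 (i : Fin 84) :
    (PMF.uniformOfFintype (Fin (10 ^ 6) → Fin 84 → Bool)).toMeasure
        {f | ∃ a b : Fin (10 ^ 6), a ≠ b ∧
          (∀ j, j ≠ i → f a j = f b j) ∧ f a i ≠ f b i}
      < ENNReal.ofReal ((1 / 2 : ℝ) ^ 45) := by
  classical
  set μ := (PMF.uniformOfFintype (Fin (10 ^ 6) → Fin 84 → Bool)).toMeasure with hμ
  set P : Finset (Fin N' × Fin N') := univ.filter (fun p => p.1 < p.2) with hP
  have hsub : {f : Fin N' → Fin 84 → Bool | ∃ a b : Fin N', a ≠ b ∧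
      (∀ j, j ≠ i → f a j = f b j) ∧ f a i ≠ f b i}
      ⊆ ⋃ p ∈ P, Spair i p := by
    rintro f ⟨a, b, hab, h1, h2⟩
    rcases hab.lt_or_gt with h | h
    · exact Set.mem_iUnion₂.mpr ⟨(a, b), by simp [hP, h], h1, h2⟩
    · exact Set.mem_iUnion₂.mpr ⟨(b, a), by simp [hP, h],
        fun j hj => (h1 j hj).symm, fun hh => h2 hh.symm⟩
  have hpair : ∀ p ∈ P, μ (Spair i p) ≤ ((2 : ℝ≥0∞) ^ 84)⁻¹ := by
    intro p hp
    simp only [hP, Finset.mem_filter] at hp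
    have hne : p.1 ≠ p.2 := ne_of_lt hp.2
    rw [hμ, PMF.toMeasure_uniformOfFintype_apply _ (Set.toFinite _).measurableSet]
    have hcardΩ : (Fintype.card (Fin N' → Fin 84 → Bool) : ℝ≥0∞)
        = ((2 : ℝ≥0∞) ^ 84) ^ N' := by
      rw [Fintype.card_fun, Fintype.card_fun, Fintype.card_bool, Fintype.card_fin, Fintype.card_fin,
        Nat.cast_pow, Nat.cast_pow, Nat.cast_ofNat]
    rw [hcardΩ]
    have hb0 : ((2 : ℝ≥0∞) ^ 84) ^ N' ≠ 0 :=
      pow_ne_zero _ (pow_ne_zero _ two_ne_zero)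
    have hbt : ((2 : ℝ≥0∞) ^ 84) ^ N' ≠ ∞ :=
      ENNReal.pow_ne_top (ENNReal.pow_ne_top ENNReal.ofNat_ne_top)
    rw [ENNReal.div_le_iff_le_mul (Or.inl hb0) (Or.inl hbt)]
    have key : ((2 : ℝ≥0∞) ^ 84) ^ N' = ((2 : ℝ≥0∞) ^ 84) ^ (N' - 1) * 2 ^ 84 := by
      rw [← pow_succ]
      congr 1
    calc (Fintype.card (Spair i p) : ℝ≥0∞)
        ≤ (((2 ^ 84) ^ (N' - 1) : ℕ) : ℝ≥0∞) := by
          exact_mod_cast card_Spair_le i p hne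
      _ = ((2 : ℝ≥0∞) ^ 84) ^ (N' - 1) := by
          rw [Nat.cast_pow, Nat.cast_pow, Nat.cast_ofNat]
      _ = ((2 : ℝ≥0∞) ^ 84)⁻¹ * ((2 : ℝ≥0∞) ^ 84) ^ N' := by
          rw [key, mul_comm (((2 : ℝ≥0∞) ^ 84) ^ (N' - 1)), ← mul_assoc,
            ENNReal.inv_mul_cancel (pow_ne_zero _ two_ne_zero)
              (ENNReal.pow_ne_top ENNReal.ofNat_ne_top), one_mul]
  have hcardP : (P.card : ℝ≥0∞) ≤ 500000000000 := by
    have hswap : (univ.filter (fun p : Fin N' × Fin N' => p.1 < p.2)).card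
        = (univ.filter (fun p : Fin N' × Fin N' => p.2 < p.1)).card :=
      Finset.card_equiv (Equiv.prodComm _ _) (by intro p; simp)
    have hdisj : Disjoint (univ.filter (fun p : Fin N' × Fin N' => p.1 < p.2))
        (univ.filter (fun p : Fin N' × Fin N' => p.2 < p.1)) := by
      simp only [Finset.disjoint_filter]
      intro p _ h1
      exact not_lt_of_gt h1
    have hcu : Fintype.card (Fin N' × Fin N') = 1000000000000 := by
      rw [Fintype.card_prod, Fintype.card_fin]
      norm_num
    have h3 := Finset.card_le_card (subset_univ
      ((univ.filter (fun p : Fin N' × Fin N' => p.1 < p.2)) ∪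
        (univ.filter (fun p : Fin N' × Fin N' => p.2 < p.1))))
    rw [Finset.card_union_of_disjoint hdisj, Finset.card_univ, hcu] at h3
    rw [← hP] at hswap h3
    have h4 : P.card ≤ 500000000000 := by omega
    exact_mod_cast h4
  have hfin : μ {f : Fin N' → Fin 84 → Bool | ∃ a b : Fin N', a ≠ b ∧
      (∀ j, j ≠ i → f a j = f b j) ∧ f a i ≠ f b i}
      ≤ 500000000000 * ((2 : ℝ≥0∞) ^ 84)⁻¹ := by
    calc μ _ ≤ μ (⋃ p ∈ P, Spair i p) := measure_mono hsub
      _ ≤ ∑ p ∈ P, μ (Spair i p) := measure_biUnion_finset_le P _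
      _ ≤ ∑ p ∈ P, ((2 : ℝ≥0∞) ^ 84)⁻¹ := Finset.sum_le_sum hpair
      _ = (P.card : ℝ≥0∞) * ((2 : ℝ≥0∞) ^ 84)⁻¹ := by
          rw [Finset.sum_const, nsmul_eq_mul]
      _ ≤ 500000000000 * ((2 : ℝ≥0∞) ^ 84)⁻¹ := mul_le_mul_left hcardP _
  refine lt_of_le_of_lt hfin ?_
  have hR : ENNReal.ofReal ((1 / 2 : ℝ) ^ 45) = ((2 : ℝ≥0∞) ^ 45)⁻¹ := by
    rw [show ((1/2 : ℝ)) ^ 45 = ((2:ℝ)^45)⁻¹ by norm_num,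
      ENNReal.ofReal_inv_of_pos (by positivity), ENNReal.ofReal_pow (by norm_num)]
    norm_num
  have h5 : (2 : ℝ≥0∞) ^ 39 * ((2 : ℝ≥0∞) ^ 84)⁻¹ = ((2 : ℝ≥0∞) ^ 45)⁻¹ := by
    rw [show (2:ℝ≥0∞)^84 = 2^39 * 2^45 by ring,
      ENNReal.mul_inv (Or.inl (by positivity)) (Or.inl (by simp)),
      ← mul_assoc, ENNReal.mul_inv_cancel (by positivity) (by simp), one_mul]
  rw [hR, ← h5]
  apply (ENNReal.mul_lt_mul_iff_left
    (ENNReal.inv_ne_zero.mpr (ENNReal.pow_ne_top ENNReal.ofNat_ne_top))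
    (ENNReal.inv_ne_top.mpr (pow_ne_zero _ two_ne_zero))).mpr
  have h6 : (500000000000 : ℕ) < 2 ^ 39 := by norm_num
  exact_mod_cast h6
end
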